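/- Let I be an ideal of R{x̄}_{D*} with characteristic set 𝒞 = {c₁,…,c_m}. If f ∈ I is reduced with respect to 𝒞 and s_f ∉ I, then f ∈ (I ∩ R), the ideal of R{x̄}_{D*} generated by I ∩ R. -/

import Mathlib

open MvPolynomial
open scoped BigOperators

/-- The variables `dᶿxⱼ` of the `D*`-polynomial ring in `n` indeterminates with `M`
operators: a pair (index of `x`, multi-exponent `θ ∈ ℕ^M`). -/
abbrev DVar (n M : ℕ) : Type := Fin n × (Fin M → ℕ)

/-- Applying the composite operator with multi-exponent `φ` to a variable. -/
def shiftVar {n M : ℕ} (u : DVar n M) (φ : Fin M → ℕ) : DVar n M :=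
  (u.1, fun l => u.2 l + φ l)

/-- `φ` encodes a composition of the associated endomorphisms only (a `σ`-transform). -/
def IsSigmaExp {M : ℕ} (σset : Finset (Fin M)) (φ : Fin M → ℕ) : Prop :=
  ∀ k, φ k ≠ 0 → k ∈ σset

/-- `φ` encodes a composition of operators involving at least one derivation-type
operator (a `δ`-transform). -/
def IsDeltaExp {M : ℕ} (σset : Finset (Fin M)) (φ : Fin M → ℕ) : Prop :=
  ∃ k, k ∉ σset ∧ φ k ≠ 0

/-- `u` is the leader of `f`: the highest-ranked variable occurring in `f`. -/
def IsLeader {R : Type} [CommRing R] {n M : ℕ} (lt : DVar n M → DVar n M → Prop)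
    (f : MvPolynomial (DVar n M) R) (u : DVar n M) : Prop :=
  u ∈ f.vars ∧ ∀ v ∈ f.vars, v ≠ u → lt v u

/-- `f` lies in (the image of) `R`, i.e. is a constant polynomial. -/
def IsConst {R : Type} [CommRing R] {n M : ℕ} (f : MvPolynomial (DVar n M) R) : Prop :=
  ∃ r : R, f = C r

/-- `g` is reduced with respect to `f`: `g` contains no `δ`-transform of the leader of
`f`, and every `σ`-transform of the leader of `f` occurs in `g` with degree `< deg f`. -/
def ReducedWrt {R : Type} [CommRing R] {n M : ℕ} (lt : DVar n M → DVar n M → Prop)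
    (σset : Finset (Fin M)) (g f : MvPolynomial (DVar n M) R) : Prop :=
  ∀ u : DVar n M, IsLeader lt f u →
    (∀ φ : Fin M → ℕ, IsDeltaExp σset φ → shiftVar u φ ∉ g.vars) ∧
    (∀ φ : Fin M → ℕ, IsSigmaExp σset φ →
      degreeOf (shiftVar u φ) g < degreeOf u f)

/-- `g` is reduced with respect to every element of `A`. -/
def ReducedWrtSet {R : Type} [CommRing R] {n M : ℕ} (lt : DVar n M → DVar n M → Prop)
    (σset : Finset (Fin M)) (g : MvPolynomial (DVar n M) R)
    (A : Set (MvPolynomial (DVar n M) R)) : Prop :=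
  ∀ f ∈ A, ReducedWrt lt σset g f

/-- `A` is autoreduced: no element is constant and any two distinct elements are reduced
with respect to each other. -/
def Autoreduced {R : Type} [CommRing R] {n M : ℕ} (lt : DVar n M → DVar n M → Prop)
    (σset : Finset (Fin M)) (A : Set (MvPolynomial (DVar n M) R)) : Prop :=
  (∀ f ∈ A, ¬ IsConst f) ∧
  ∀ f ∈ A, ∀ g ∈ A, f ≠ g → ReducedWrt lt σset g f

/-- `rk f < rk g`: the leader of `f` is below that of `g`, or they coincide and the
leading degree of `f` is smaller. -/
def RkLt {R : Type} [CommRing R] {n M : ℕ} (lt : DVar n M → DVar n M → Prop)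
    (f g : MvPolynomial (DVar n M) R) : Prop :=
  ∃ uf ug, IsLeader lt f uf ∧ IsLeader lt g ug ∧
    (lt uf ug ∨ (uf = ug ∧ degreeOf uf f < degreeOf ug g))

/-- `rk f = rk g`: same leader and same leading degree. -/
def RkEq {R : Type} [CommRing R] {n M : ℕ} (lt : DVar n M → DVar n M → Prop)
    (f g : MvPolynomial (DVar n M) R) : Prop :=
  ∃ uf ug, IsLeader lt f uf ∧ IsLeader lt g ug ∧ uf = ug ∧
    degreeOf uf f = degreeOf ug g

/-- `rk f ≤ rk g` (with constants of lowest rank). -/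
def RkLe {R : Type} [CommRing R] {n M : ℕ} (lt : DVar n M → DVar n M → Prop)
    (f g : MvPolynomial (DVar n M) R) : Prop :=
  IsConst f ∨ RkLt lt f g ∨ RkEq lt f g

/-- `lt` is a ranking of the variables, with `σ`-operators `σset` and operator ranks `ν`. -/
structure IsRanking {n M : ℕ} (lt : DVar n M → DVar n M → Prop)
    (σset : Finset (Fin M)) (ν : Fin M → ℕ) : Prop where
  trichot : ∀ u v, lt u v ∨ u = v ∨ lt v u
  irrefl : ∀ u, ¬ lt u u
  trans : ∀ u v w, lt u v → lt v w → lt u w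
  wf : WellFounded lt
  lt_op : ∀ (u : DVar n M) (k : Fin M), lt u (shiftVar u (Pi.single k 1))
  mono : ∀ (u v : DVar n M) (k : Fin M), lt u v →
    lt (shiftVar u (Pi.single k 1)) (shiftVar v (Pi.single k 1))
  op_ord : ∀ (u : DVar n M) (k k' : Fin M), ν k < ν k' →
    lt (shiftVar u (Pi.single k 1)) (shiftVar u (Pi.single k' 1))
  nu_sigma : ∀ k ∈ σset, ν k = 0

/-- Lexicographic comparison of two rank-sorted lists of `D*`-polynomials. -/
def PrecList {R : Type} [CommRing R] {n M : ℕ} (lt : DVar n M → DVar n M → Prop)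
    (la lb : List (MvPolynomial (DVar n M) R)) : Prop :=
  (∃ i : ℕ, i < la.length ∧ i < lb.length ∧
      RkLt lt (la.getD i 0) (lb.getD i 0) ∧
      ∀ j < i, RkEq lt (la.getD j 0) (lb.getD j 0)) ∨
  (lb.length < la.length ∧ ∀ i < lb.length, RkEq lt (la.getD i 0) (lb.getD i 0))

/-- The pre-order `A ≺ B` on autoreduced (finite) sets of `D*`-polynomials. -/
def Prec {R : Type} [CommRing R] {n M : ℕ} (lt : DVar n M → DVar n M → Prop)
    (A B : Finset (MvPolynomial (DVar n M) R)) : Prop :=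
  ∃ la lb : List (MvPolynomial (DVar n M) R),
    la.Nodup ∧ lb.Nodup ∧ (∀ f, f ∈ la ↔ f ∈ A) ∧ (∀ f, f ∈ lb ↔ f ∈ B) ∧
    la.Pairwise (RkLt lt) ∧ lb.Pairwise (RkLt lt) ∧ PrecList lt la lb

/-- The initial of `f` with respect to the variable `u`: the leading coefficient of `f`
viewed as a univariate polynomial in `u`. -/
noncomputable def initialOf {R : Type} [CommRing R] {n M : ℕ} (u : DVar n M)
    (f : MvPolynomial (DVar n M) R) : MvPolynomial (DVar n M) R :=
  ∑ d ∈ f.support.filter (fun d => d u = degreeOf u f),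
    monomial (d.erase u) (coeff d f)

/-- `𝒞` is a characteristic set of the ideal `I`: a minimal element (for `≺`) of the
collection of autoreduced subsets `A ⊆ I` with `s_f ∉ I` for all `f ∈ A`. -/
def IsCharSet {R : Type} [CommRing R] {n M : ℕ} (lt : DVar n M → DVar n M → Prop)
    (σset : Finset (Fin M)) (I : Ideal (MvPolynomial (DVar n M) R))
    (𝒞 : Finset (MvPolynomial (DVar n M) R)) : Prop :=
  (Autoreduced lt σset (𝒞 : Set (MvPolynomial (DVar n M) R)) ∧
    (𝒞 : Set (MvPolynomial (DVar n M) R)) ⊆ (I : Set (MvPolynomial (DVar n M) R)) ∧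
    ∀ f ∈ 𝒞, ∀ u : DVar n M, IsLeader lt f u → pderiv u f ∉ I) ∧
  ∀ B : Finset (MvPolynomial (DVar n M) R),
    Autoreduced lt σset (B : Set (MvPolynomial (DVar n M) R)) →
    (B : Set (MvPolynomial (DVar n M) R)) ⊆ (I : Set (MvPolynomial (DVar n M) R)) →
    (∀ f ∈ B, ∀ u : DVar n M, IsLeader lt f u → pderiv u f ∉ I) →
    ¬ Prec lt B 𝒞

section AuxLemmas

private lemma finset_exists_min {α : Type*} (r : α → α → Prop)
    (htrans : ∀ a b c, r a b → r b c → r a c) (hirr : ∀ a, ¬ r a a)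
    (S : Finset α) (hne : S.Nonempty) : ∃ m ∈ S, ∀ x ∈ S, ¬ r x m := by
  classical
  revert hne
  induction S using Finset.induction_on with
  | empty => intro h; exact absurd h (by simp)
  | @insert a T ha ih =>
    intro _
    rcases T.eq_empty_or_nonempty with rfl | hT
    · refine ⟨a, Finset.mem_insert_self _ _, ?_⟩
      intro x hx
      have hx' : x = a := by simpa using hx
      subst hx'
      exact hirr _
    · obtain ⟨m, hm, hmin⟩ := ih hT
      by_cases ham : r a m
      · refine ⟨a, Finset.mem_insert_self _ _, ?_⟩
        intro x hx hxa
        rcases Finset.mem_insert.mp hx with rfl | hx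
        · exact hirr x hxa
        · exact hmin x hx (htrans x a m hxa ham)
      · refine ⟨m, Finset.mem_insert_of_mem hm, ?_⟩
        intro x hx
        rcases Finset.mem_insert.mp hx with rfl | hx
        · exact ham
        · exact hmin x hx

private lemma exists_sorted_list {α : Type*} (r : α → α → Prop)
    (htrans : ∀ a b c, r a b → r b c → r a c) (hirr : ∀ a, ¬ r a a)
    (S : Finset α) (htri : ∀ a ∈ S, ∀ b ∈ S, a ≠ b → r a b ∨ r b a) :
    ∃ l : List α, l.Nodup ∧ (∀ x, x ∈ l ↔ x ∈ S) ∧ l.Pairwise r := by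
  classical
  revert htri
  induction S using Finset.strongInductionOn with
  | _ S ih =>
    intro htri
    rcases S.eq_empty_or_nonempty with rfl | hne
    · exact ⟨[], by simp, by simp, by simp⟩
    · obtain ⟨m, hm, hmin⟩ := finset_exists_min r htrans hirr S hne
      obtain ⟨l, hnd, hmem, hpw⟩ := ih (S.erase m) (Finset.erase_ssubset hm)
        (fun a ha b hb hab =>
          htri a (Finset.mem_of_mem_erase ha) b (Finset.mem_of_mem_erase hb) hab)
      refine ⟨m :: l, ?_, ?_, ?_⟩
      · exact List.nodup_cons.mpr
          ⟨fun h => (Finset.mem_erase.mp ((hmem m).mp h)).1 rfl, hnd⟩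
      · intro x
        simp only [List.mem_cons, hmem, Finset.mem_erase]
        constructor
        · rintro (rfl | ⟨_, h⟩)
          · exact hm
          · exact h
        · intro hx
          by_cases hxm : x = m
          · exact Or.inl hxm
          · exact Or.inr ⟨hxm, hx⟩
      · refine List.pairwise_cons.mpr ⟨?_, hpw⟩
        intro x hx
        have hxe := (hmem x).mp hx
        have hxS := Finset.mem_of_mem_erase hxe
        have hxm := (Finset.mem_erase.mp hxe).1
        rcases htri m hm x hxS (fun h => hxm h.symm) with h | h
        · exact h
        · exact absurd h (hmin x hxS)

variable {R : Type} [CommRing R] {n M : ℕ} {lt : DVar n M → DVar n M → Prop}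
  {σset : Finset (Fin M)} {ν : Fin M → ℕ}

private lemma shiftVar_zero' (u : DVar n M) : shiftVar u (fun _ => 0) = u := by
  cases u; simp [shiftVar]

private lemma lt_shiftVar (hrank : IsRanking lt σset ν) :
    ∀ (N : ℕ) (φ : Fin M → ℕ), ∑ k, φ k = N → (∃ k, φ k ≠ 0) →
      ∀ u : DVar n M, lt u (shiftVar u φ) := by
  intro N
  induction N using Nat.strong_induction_on with
  | _ N ih =>
    intro φ hN hφ u
    obtain ⟨k, hk⟩ := hφ
    classical
    set φ' : Fin M → ℕ := fun l => if l = k then φ l - 1 else φ l with hφ'def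
    have hdec : ∀ l, φ l = (Pi.single k 1 : Fin M → ℕ) l + φ' l := by
      intro l
      by_cases h : l = k
      · rw [h, Pi.single_eq_same]
        simp only [hφ'def, if_pos rfl]
        omega
      · simp [hφ'def, Pi.single_apply, h]
    have hshift : shiftVar u φ = shiftVar (shiftVar u (Pi.single k 1)) φ' := by
      cases u with
      | mk x θ =>
        simp only [shiftVar]
        congr 1
        funext l
        rw [hdec l]
        omega
    have hsum : ∑ l, φ l = 1 + ∑ l, φ' l := by
      rw [Finset.sum_congr rfl (fun l _ => hdec l), Finset.sum_add_distrib,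
        Finset.sum_pi_single' k 1 Finset.univ, if_pos (Finset.mem_univ k)]
    by_cases h0 : ∃ l, φ' l ≠ 0
    · rw [hshift]
      refine hrank.trans _ _ _ (hrank.lt_op u k) (ih (∑ l, φ' l) (by omega) φ' rfl h0 _)
    · push_neg at h0
      have e0 : φ' = fun _ => 0 := funext h0
      rw [hshift, e0, shiftVar_zero']
      exact hrank.lt_op u k

private lemma lt_asymm' (hrank : IsRanking lt σset ν) {u v : DVar n M}
    (h : lt u v) (h' : lt v u) : False :=
  hrank.irrefl u (hrank.trans u v u h h')

private lemma leader_unique (hrank : IsRanking lt σset ν)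
    {g : MvPolynomial (DVar n M) R} {u v : DVar n M}
    (hu : IsLeader lt g u) (hv : IsLeader lt g v) : u = v := by
  by_contra h
  exact lt_asymm' hrank (hv.2 u hu.1 h) (hu.2 v hv.1 (fun e => h e.symm))

private lemma not_mem_vars_of_leader_lt (hrank : IsRanking lt σset ν)
    {g : MvPolynomial (DVar n M) R} {v w : DVar n M}
    (hgv : IsLeader lt g v) (hvw : lt v w) : w ∉ g.vars := by
  intro hmem
  rcases eq_or_ne w v with rfl | hne
  · exact hrank.irrefl _ hvw
  · exact lt_asymm' hrank hvw (hgv.2 w hmem hne)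

private lemma degreeOf_eq_zero_of_not_mem' {g : MvPolynomial (DVar n M) R}
    {v : DVar n M} (h : v ∉ g.vars) : MvPolynomial.degreeOf v g = 0 := by
  classical
  rw [MvPolynomial.degreeOf_eq_sup]
  apply Nat.eq_zero_of_le_zero
  apply Finset.sup_le
  intro d hd
  have hz : d v = 0 := by
    by_contra hc
    exact h ((MvPolynomial.mem_vars v).mpr ⟨d, hd, Finsupp.mem_support_iff.mpr hc⟩)
  simp [hz]

private lemma degreeOf_pos_of_mem' {g : MvPolynomial (DVar n M) R}
    {v : DVar n M} (h : v ∈ g.vars) : 0 < MvPolynomial.degreeOf v g := by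
  classical
  obtain ⟨d, hd, hdv⟩ := (MvPolynomial.mem_vars v).mp h
  have h1 : d v ≠ 0 := Finsupp.mem_support_iff.mp hdv
  have h2 : d v ≤ MvPolynomial.degreeOf v g := by
    rw [MvPolynomial.degreeOf_eq_sup]
    exact Finset.le_sup (f := fun m => m v) hd
  omega

private lemma isConst_of_vars_empty {g : MvPolynomial (DVar n M) R}
    (h : g.vars = ∅) : IsConst g := by
  classical
  refine ⟨MvPolynomial.coeff 0 g, ?_⟩
  apply MvPolynomial.ext
  intro d
  rcases eq_or_ne d 0 with rfl | hd
  · simp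
  · have hz : MvPolynomial.coeff d g = 0 := by
      by_contra hc
      obtain ⟨i, hi⟩ := Finsupp.support_nonempty_iff.mpr hd
      exact absurd ((MvPolynomial.mem_vars i).mpr
        ⟨d, MvPolynomial.mem_support_iff.mpr hc, hi⟩) (by simp [h])
    simp [MvPolynomial.coeff_C, hd, hz, Ne.symm hd]

private lemma exists_leader (hrank : IsRanking lt σset ν)
    {g : MvPolynomial (DVar n M) R} (h : ¬ IsConst g) : ∃ u, IsLeader lt g u := by
  have hne : g.vars.Nonempty := by
    rcases g.vars.eq_empty_or_nonempty with he | hne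
    · exact absurd (isConst_of_vars_empty he) h
    · exact hne
  obtain ⟨m, hm, hmin⟩ := finset_exists_min (fun a b => lt b a)
    (fun a b c hab hbc => hrank.trans c b a hbc hab) hrank.irrefl g.vars hne
  refine ⟨m, hm, ?_⟩
  intro v hv hvm
  rcases hrank.trichot v m with h1 | h1 | h1
  · exact h1
  · exact absurd h1 hvm
  · exact absurd h1 (hmin v hv)

private lemma rkLt_trans (hrank : IsRanking lt σset ν) :
    ∀ a b c : MvPolynomial (DVar n M) R, RkLt lt a b → RkLt lt b c → RkLt lt a c := by
  rintro a b c ⟨ua, ub, hua, hub, hab⟩ ⟨ub', uc, hub', huc, hbc⟩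
  have e : ub = ub' := leader_unique hrank hub hub'
  subst e
  refine ⟨ua, uc, hua, huc, ?_⟩
  rcases hab with h1 | ⟨e1, h1⟩
  · rcases hbc with h2 | ⟨e2, h2⟩
    · exact Or.inl (hrank.trans _ _ _ h1 h2)
    · subst e2; exact Or.inl h1
  · subst e1
    rcases hbc with h2 | ⟨e2, h2⟩
    · exact Or.inl h2
    · subst e2; exact Or.inr ⟨rfl, h1.trans h2⟩

private lemma rkLt_irrefl (hrank : IsRanking lt σset ν) :
    ∀ a : MvPolynomial (DVar n M) R, ¬ RkLt lt a a := by
  rintro a ⟨u, v, hu, hv, h⟩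
  have e : u = v := leader_unique hrank hu hv
  subst e
  rcases h with h | ⟨_, h⟩
  · exact hrank.irrefl _ h
  · exact Nat.lt_irrefl _ h

private lemma rk_trichot (hrank : IsRanking lt σset ν)
    {a b : MvPolynomial (DVar n M) R} {ua ub : DVar n M}
    (ha : IsLeader lt a ua) (hb : IsLeader lt b ub) :
    RkLt lt a b ∨ RkEq lt a b ∨ RkLt lt b a := by
  rcases hrank.trichot ua ub with h | h | h
  · exact Or.inl ⟨ua, ub, ha, hb, Or.inl h⟩
  · subst h
    rcases Nat.lt_trichotomy (MvPolynomial.degreeOf ua a) (MvPolynomial.degreeOf ua b)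
      with h | h | h
    · exact Or.inl ⟨ua, ua, ha, hb, Or.inr ⟨rfl, h⟩⟩
    · exact Or.inr (Or.inl ⟨ua, ua, ha, hb, rfl, h⟩)
    · exact Or.inr (Or.inr ⟨ua, ua, hb, ha, Or.inr ⟨rfl, h⟩⟩)
  · exact Or.inr (Or.inr ⟨ub, ua, hb, ha, Or.inl h⟩)

private lemma not_rkEq_of_reduced {a b : MvPolynomial (DVar n M) R}
    (hab : ReducedWrt lt σset b a) : ¬ RkEq lt a b := by
  rintro ⟨ua, ub, ha, hb, e, hdeg⟩
  subst e
  have h1 := (hab ua ha).2 (fun _ => 0) (fun k hk => absurd rfl hk)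
  rw [shiftVar_zero'] at h1
  omega

private lemma reducedWrt_of_rkLt (hrank : IsRanking lt σset ν)
    {g f : MvPolynomial (DVar n M) R} (h : RkLt lt g f) : ReducedWrt lt σset g f := by
  obtain ⟨v, u0, hv, hu0, hcase⟩ := h
  intro u hu
  have e : u0 = u := leader_unique hrank hu0 hu
  subst e
  have hvars : ∀ φ : Fin M → ℕ, (∃ k, φ k ≠ 0) → shiftVar u0 φ ∉ g.vars := by
    intro φ hφ
    have h1 : lt u0 (shiftVar u0 φ) := lt_shiftVar hrank _ φ rfl hφ u0
    have h2 : lt v (shiftVar u0 φ) := by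
      rcases hcase with hc | ⟨rfl, _⟩
      · exact hrank.trans _ _ _ hc h1
      · exact h1
    exact not_mem_vars_of_leader_lt hrank hv h2
  constructor
  · intro φ hφ
    obtain ⟨k, _, hk⟩ := hφ
    exact hvars φ ⟨k, hk⟩
  · intro φ hφ
    by_cases h0 : ∃ k, φ k ≠ 0
    · rw [degreeOf_eq_zero_of_not_mem' (hvars φ h0)]
      exact degreeOf_pos_of_mem' hu0.1
    · push_neg at h0
      have e0 : φ = fun _ => 0 := funext h0
      rw [e0, shiftVar_zero']
      rcases hcase with hc | ⟨rfl, hdeg⟩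
      · rw [degreeOf_eq_zero_of_not_mem' (not_mem_vars_of_leader_lt hrank hv hc)]
        exact degreeOf_pos_of_mem' hu0.1
      · exact hdeg

end AuxLemmas

/-- If `𝒞` is a characteristic set of an ideal `I` of the
`D*`-polynomial ring, and `f ∈ I` is reduced with respect to `𝒞` with separant `s_f ∉ I`,
then `f` lies in the ideal `(I ∩ R)` generated by the constants of `I`. -/
theorem reduced_mem_constant_ideal {R : Type} [CommRing R] {n M : ℕ}
    (lt : DVar n M → DVar n M → Prop) (σset : Finset (Fin M)) (ν : Fin M → ℕ)
    (hrank : IsRanking lt σset ν)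
    (I : Ideal (MvPolynomial (DVar n M) R))
    (𝒞 : Finset (MvPolynomial (DVar n M) R))
    (h𝒞 : IsCharSet lt σset I 𝒞)
    (f : MvPolynomial (DVar n M) R) (hfI : f ∈ I)
    (hred : ReducedWrtSet lt σset f (𝒞 : Set (MvPolynomial (DVar n M) R)))
    (hsep : ∀ u : DVar n M, IsLeader lt f u → pderiv u f ∉ I) :
    f ∈ Ideal.span ((I : Set (MvPolynomial (DVar n M) R)) ∩
      Set.range (C : R →+* MvPolynomial (DVar n M) R)) := by
    classical
  by_cases hconst : IsConst f
  · obtain ⟨r, rfl⟩ := hconst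
    exact Ideal.subset_span ⟨hfI, ⟨r, rfl⟩⟩
  exfalso
  obtain ⟨⟨⟨hncC, hautoC⟩, hsubC, hsepC⟩, hminC⟩ := h𝒞
  obtain ⟨uf, huf⟩ := exists_leader hrank hconst
  have hf𝒞 : f ∉ 𝒞 := by
    intro hmem
    have h1 := (hred f (Finset.mem_coe.mpr hmem) uf huf).2 (fun _ => 0)
      (fun k hk => absurd rfl hk)
    rw [shiftVar_zero'] at h1
    exact Nat.lt_irrefl _ h1
  have hlead𝒞 : ∀ c ∈ 𝒞, ∃ u, IsLeader lt c u := fun c hc =>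
    exists_leader hrank (hncC c (Finset.mem_coe.mpr hc))
  have hcomp : ∀ c ∈ 𝒞, ¬ RkLt lt c f → RkLt lt f c := by
    intro c hc hnc
    obtain ⟨uc, huc⟩ := hlead𝒞 c hc
    rcases rk_trichot hrank huc huf with h | h | h
    · exact absurd h hnc
    · exact absurd h (not_rkEq_of_reduced (hred c (Finset.mem_coe.mpr hc)))
    · exact h
  have htri𝒞 : ∀ a ∈ 𝒞, ∀ b ∈ 𝒞, a ≠ b → RkLt lt a b ∨ RkLt lt b a := by
    intro a ha b hb hab
    obtain ⟨ua, hua⟩ := hlead𝒞 a ha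
    obtain ⟨ub, hub⟩ := hlead𝒞 b hb
    rcases rk_trichot hrank hua hub with h | h | h
    · exact Or.inl h
    · exact absurd h (not_rkEq_of_reduced
        (hautoC a (Finset.mem_coe.mpr ha) b (Finset.mem_coe.mpr hb) hab))
    · exact Or.inr h
  obtain ⟨lb, hlbnd, hlbmem, hlbpw⟩ := exists_sorted_list (RkLt lt)
    (rkLt_trans hrank) (rkLt_irrefl hrank) 𝒞 htri𝒞
  set p : MvPolynomial (DVar n M) R → Bool := fun c => decide (RkLt lt c f) with hp
  set tw : List (MvPolynomial (DVar n M) R) := lb.takeWhile p with htw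
  set la : List (MvPolynomial (DVar n M) R) := tw ++ [f] with hla
  have htwsub : tw.Sublist lb := List.takeWhile_sublist p
  have htwmem : ∀ x ∈ tw, x ∈ 𝒞 ∧ RkLt lt x f := by
    intro x hx
    refine ⟨(hlbmem x).mp (htwsub.subset hx), ?_⟩
    have hpx := List.mem_takeWhile_imp hx
    rw [hp] at hpx
    exact of_decide_eq_true hpx
  have hfntw : f ∉ tw := fun h => hf𝒞 ((htwmem f h).1)
  have hlamem : ∀ x ∈ la, (x ∈ 𝒞 ∧ RkLt lt x f) ∨ x = f := by
    intro x hx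
    rcases List.mem_append.mp hx with h | h
    · exact Or.inl (htwmem x h)
    · exact Or.inr (List.mem_singleton.mp h)
  set B : Finset (MvPolynomial (DVar n M) R) := la.toFinset with hB
  have hBmem : ∀ x, x ∈ B ↔ x ∈ la := fun x => List.mem_toFinset
  have hBauto : Autoreduced lt σset (B : Set (MvPolynomial (DVar n M) R)) := by
    constructor
    · intro g hg
      rcases hlamem g ((hBmem g).mp hg) with ⟨hg𝒞, _⟩ | rfl
      · exact hncC g (Finset.mem_coe.mpr hg𝒞)
      · exact hconst
    · intro a ha b hb hab
      rcases hlamem a ((hBmem a).mp ha) with ⟨ha𝒞, halt⟩ | rfl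
      · rcases hlamem b ((hBmem b).mp hb) with ⟨hb𝒞, hblt⟩ | rfl
        · exact hautoC a (Finset.mem_coe.mpr ha𝒞) b (Finset.mem_coe.mpr hb𝒞) hab
        · exact hred a (Finset.mem_coe.mpr ha𝒞)
      · rcases hlamem b ((hBmem b).mp hb) with ⟨hb𝒞, hblt⟩ | rfl
        · exact reducedWrt_of_rkLt hrank hblt
        · exact absurd rfl hab
  have hBsub : (B : Set (MvPolynomial (DVar n M) R)) ⊆
      (I : Set (MvPolynomial (DVar n M) R)) := by
    intro x hx
    rcases hlamem x ((hBmem x).mp hx) with ⟨hx𝒞, _⟩ | rfl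
    · exact hsubC (Finset.mem_coe.mpr hx𝒞)
    · exact hfI
  have hBsep : ∀ g ∈ B, ∀ u : DVar n M, IsLeader lt g u → pderiv u g ∉ I := by
    intro g hg u hu
    rcases hlamem g ((hBmem g).mp hg) with ⟨hg𝒞, _⟩ | rfl
    · exact hsepC g hg𝒞 u hu
    · exact hsep u hu
  have hrkeqself : ∀ j (hj : j < tw.length),
      RkEq lt (tw.getD j 0) (tw.getD j 0) := by
    intro j hj
    have hme : tw.getD j 0 ∈ tw := by
      rw [List.getD_eq_getElem _ _ hj]
      exact List.getElem_mem hj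
    obtain ⟨h𝒞j, _⟩ := htwmem _ hme
    obtain ⟨u, hu⟩ := hlead𝒞 _ h𝒞j
    exact ⟨u, u, hu, hu, rfl, rfl⟩
  have hprec : Prec lt B 𝒞 := by
    refine ⟨la, lb, ?_, hlbnd, fun x => (hBmem x).symm, hlbmem, ?_, hlbpw, ?_⟩
    · refine List.nodup_append'.mpr ⟨List.Nodup.sublist htwsub hlbnd,
        List.nodup_singleton f, ?_⟩
      intro a ha hb
      rw [List.mem_singleton] at hb
      subst hb
      exact hfntw ha
    · refine List.pairwise_append.mpr ⟨List.Pairwise.sublist htwsub hlbpw,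
        List.pairwise_singleton _ _, ?_⟩
      intro x hx y hy
      rw [List.mem_singleton] at hy
      subst hy
      exact (htwmem x hx).2
    · have hsplit : tw ++ lb.dropWhile p = lb := List.takeWhile_append_dropWhile
      have hgetla : ∀ j, j < tw.length → la.getD j 0 = tw.getD j 0 := by
        intro j hj
        rw [hla, List.getD_eq_getElem?_getD, List.getElem?_append_left hj,
          ← List.getD_eq_getElem?_getD]
      have hgetlb : ∀ j, j < tw.length → lb.getD j 0 = tw.getD j 0 := by
        intro j hj
        rw [← hsplit, List.getD_eq_getElem?_getD, List.getElem?_append_left hj,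
          ← List.getD_eq_getElem?_getD]
      cases hdw : lb.dropWhile p with
      | nil =>
        right
        have hlb : lb = tw := by rw [← hsplit, hdw, List.append_nil]
        constructor
        · rw [hla, hlb, List.length_append]
          simp
        · intro i hi
          have hi' : i < tw.length := by rw [hlb] at hi; exact hi
          rw [hgetla i hi', hlb]
          exact hrkeqself i hi'
      | cons x dw' =>
        left
        have hlbx : lb.getD tw.length 0 = x := by
          rw [← hsplit, hdw, List.getD_eq_getElem?_getD,
            List.getElem?_append_right (Nat.le_refl tw.length)]
          simp
        have hlaf : la.getD tw.length 0 = f := by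
          rw [hla, List.getD_eq_getElem?_getD, List.getElem?_concat_length]
          rfl
        have hxmem : x ∈ lb := by
          rw [← hsplit, hdw]
          exact List.mem_append_right _ List.mem_cons_self
        have hx𝒞 : x ∈ 𝒞 := (hlbmem x).mp hxmem
        have hxnp : ¬ RkLt lt x f := by
          have hhead := List.head?_dropWhile_not p lb
          rw [hdw] at hhead
          simp only [List.head?_cons] at hhead
          rw [hp] at hhead
          exact of_decide_eq_false hhead
        refine ⟨tw.length, ?_, ?_, ?_, ?_⟩
        · rw [hla, List.length_append]
          simp
        · rw [← hsplit, hdw, List.length_append]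
          simp
        · rw [hlaf, hlbx]
          exact hcomp x hx𝒞 hxnp
        · intro j hj
          rw [hgetla j hj, hgetlb j hj]
          exact hrkeqself j hj
  exact hminC B hBauto hBsub hBsep hprec
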